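/- Let n ≥ 2 and M ≥ 2, and let f : [0,1]ⁿ → ℝ be a continuous function that is affine on every grid cell C_k = Π_{i=1}^{n} [k_i/M, (k_i+1)/M], k ∈ {0,…,M−1}ⁿ. Then there exist parameters w_i ∈ ℝⁿ, b_i, λ_i ∈ ℝ (i = 1,…,N) with N = M·n + 1 such that f(x) = Σ_{i=1}^{N} λ_i · max(0, ⟨w_i, x⟩ + b_i) for every x ∈ [0,1]ⁿ. That is, every continuous piecewise linear function on the mesh-1/M grid partition of [0,1]ⁿ, having Mⁿ linear pieces, is realized exactly on [0,1]ⁿ by a two-layer ReLU network with M·n + 1 hidden units. -/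
import Mathlib


open Set

/-- Every continuous piecewise linear function with respect
to the mesh-`1/M` grid partition of `[0,1]ⁿ` (having `Mⁿ` linear pieces) is
realized exactly on `[0,1]ⁿ` by a two-layer ReLU network with `M·n + 1` hidden
units. -/
theorem grid_piecewise_linear_realized_by_relu
    (n M : ℕ) (hn : 2 ≤ n) (hM : 2 ≤ M)
    (f : (Fin n → ℝ) → ℝ) (hfc : ContinuousOn f (Icc 0 1))
    (hfa : ∀ k : Fin n → ℕ, (∀ i, k i < M) →
      ∃ (a : Fin n → ℝ) (c : ℝ), ∀ x : Fin n → ℝ,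
        (∀ i, (k i : ℝ) / M ≤ x i ∧ x i ≤ ((k i : ℝ) + 1) / M) →
        f x = (∑ j, a j * x j) + c) :
    ∃ (w : Fin (M * n + 1) → Fin n → ℝ) (b lam : Fin (M * n + 1) → ℝ),
      ∀ x ∈ Icc (0 : Fin n → ℝ) 1,
        f x = ∑ i, lam i * max 0 ((∑ j, w i j * x j) + b i) := by
  classical
  have hM0 : (0:ℝ) < M := by
    have : (0:ℕ) < M := by omega
    exact_mod_cast this
  have hMne : (M:ℝ) ≠ 0 := ne_of_gt hM0
  -- choose affine data on every (valid) cell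
  have hfa' : ∀ k : Fin n → ℕ, ∃ (a : Fin n → ℝ) (c : ℝ), (∀ i, k i < M) →
      ∀ x : Fin n → ℝ, (∀ i, (k i : ℝ) / M ≤ x i ∧ x i ≤ ((k i : ℝ) + 1) / M) →
        f x = (∑ j, a j * x j) + c := by
    intro k
    by_cases h : ∀ i, k i < M
    · obtain ⟨a, c, h'⟩ := hfa k h
      exact ⟨a, c, fun _ => h'⟩
    · exact ⟨0, 0, fun h' => absurd h' h⟩
  choose A C hAC using hfa'
  -- the grid vertices
  set v : (Fin n → ℕ) → (Fin n → ℝ) := fun k i => (k i : ℝ)/M with hvdef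
  -- membership of vertices in cells
  have memv : ∀ (k k' : Fin n → ℕ), (∀ i, k i ≤ k' i ∧ k' i ≤ k i + 1) →
      ∀ i, (k i : ℝ)/M ≤ v k' i ∧ v k' i ≤ ((k i : ℝ)+1)/M := by
    intro k k' h i
    have h1 : (k i : ℝ) ≤ (k' i : ℝ) := by exact_mod_cast (h i).1
    have h2 : (k' i : ℝ) ≤ (k i : ℝ) + 1 := by exact_mod_cast (h i).2
    constructor
    · show (k i : ℝ)/M ≤ (k' i : ℝ)/M
      gcongr
    · show (k' i : ℝ)/M ≤ ((k i : ℝ)+1)/M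
      gcongr
  have memself : ∀ k, ∀ i, (k i : ℝ)/M ≤ v k i ∧ v k i ≤ ((k i : ℝ)+1)/M :=
    fun k => memv k k (fun i => ⟨le_rfl, Nat.le_succ _⟩)
  -- difference of f at two points of one cell
  have diff : ∀ k, (∀ i, k i < M) → ∀ x y : Fin n → ℝ,
      (∀ i, (k i : ℝ)/M ≤ x i ∧ x i ≤ ((k i : ℝ)+1)/M) →
      (∀ i, (k i : ℝ)/M ≤ y i ∧ y i ≤ ((k i : ℝ)+1)/M) →
      f x - f y = ∑ j, A k j * (x j - y j) := by
    intro k hk x y hx hy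
    rw [hAC k hk x hx, hAC k hk y hy]
    simp only [mul_sub, Finset.sum_sub_distrib]
    ring
  -- difference of coordinates of adjacent vertices
  have vdiff : ∀ (k : Fin n → ℕ) (i j' : Fin n),
      v (Function.update k i (k i + 1)) j' - v k j' = if j' = i then (1:ℝ)/(M:ℝ) else 0 := by
    intro k i j'
    by_cases h : j' = i
    · subst h
      show ((Function.update k j' (k j' + 1) j' : ℕ) : ℝ)/M - (k j' : ℝ)/M = _
      simp only [Function.update_self, if_pos rfl]
      push_cast
      ring
    · show ((Function.update k i (k i + 1) j' : ℕ) : ℝ)/M - (k j' : ℝ)/M = _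
      rw [Function.update_of_ne h]
      simp [h]
  -- slope in direction j depends only on the j-th coordinate of the cell:
  -- step lemma, moving one other coordinate down by one
  have σg : True := trivial
  clear σg
  set sg : Fin n → ℕ → ℝ := fun j m => A (fun i => if i = j then m else 0) j with hsg
  have L1 : ∀ k, (∀ i, k i < M) → ∀ i j : Fin n, j ≠ i → 0 < k i →
      A k j = A (Function.update k i (k i - 1)) j := by
    intro k hk i j hji hki
    set k' : Fin n → ℕ := Function.update k i (k i - 1) with hk'def
    have hk' : ∀ i', k' i' < M := by
      intro i'
      have h1 := hk i'
      have h2 := hk i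
      simp only [hk'def, Function.update_apply]
      split <;> rename_i hsp <;> first | (subst hsp; omega) | omega
    set q : Fin n → ℕ := Function.update k j (k j + 1) with hqdef
    have hq_in_k : ∀ i', (k i' : ℝ)/M ≤ v q i' ∧ v q i' ≤ ((k i' : ℝ)+1)/M := by
      refine memv k q (fun i' => ?_)
      simp only [hqdef, Function.update_apply]
      split <;> rename_i hsp <;> first | (subst hsp; omega) | omega
    have hp_in_k' : ∀ i', (k' i' : ℝ)/M ≤ v k i' ∧ v k i' ≤ ((k' i' : ℝ)+1)/M := by
      refine memv k' k (fun i' => ?_)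
      simp only [hk'def, Function.update_apply]
      split <;> rename_i hsp <;> first | (subst hsp; omega) | omega
    have hq_in_k' : ∀ i', (k' i' : ℝ)/M ≤ v q i' ∧ v q i' ≤ ((k' i' : ℝ)+1)/M := by
      refine memv k' q (fun i' => ?_)
      have hij' : i ≠ j := Ne.symm hji
      simp only [hk'def, hqdef, Function.update_apply]
      rcases eq_or_ne i' i with h | h
      · subst h
        rw [if_pos rfl, if_neg hij']
        omega
      · rcases eq_or_ne i' j with h2 | h2
        · subst h2
          rw [if_neg h, if_pos rfl]
          omega
        · rw [if_neg h, if_neg h2]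
          omega
    have e1 : f (v q) - f (v k) = A k j * ((1:ℝ)/(M:ℝ)) := by
      rw [diff k hk (v q) (v k) hq_in_k (memself k)]
      rw [Finset.sum_congr rfl (fun j' _ => by rw [hqdef, vdiff k j j'])]
      simp [Finset.sum_ite_eq', mul_ite]
    have e2 : f (v q) - f (v k) = A k' j * ((1:ℝ)/(M:ℝ)) := by
      rw [diff k' hk' (v q) (v k) hq_in_k' hp_in_k']
      rw [Finset.sum_congr rfl (fun j' _ => by rw [hqdef, vdiff k j j'])]
      simp [Finset.sum_ite_eq', mul_ite]
    have := e1.symm.trans e2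
    exact mul_right_cancel₀ (one_div_ne_zero hMne) this
  -- slope well-definedness
  have L2 : ∀ N : ℕ, ∀ k : Fin n → ℕ, (∀ i, k i < M) → ∀ j : Fin n,
      (∑ i, if i = j then 0 else k i) ≤ N → A k j = sg j (k j) := by
    intro N
    induction N with
    | zero =>
      intro k hk j hsum
      have hz : ∀ i, i ≠ j → k i = 0 := by
        intro i hij
        have := Finset.sum_eq_zero_iff.mp (Nat.le_zero.mp hsum) i (Finset.mem_univ i)
        simpa [hij] using this
      have hkeq : k = fun i => if i = j then k j else 0 := by
        funext i
        by_cases h : i = j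
        · simp [h]
        · simp [h, hz i h]
      conv_lhs => rw [hkeq]
    | succ N ih =>
      intro k hk j hsum
      by_cases hbase : ∀ i, i ≠ j → k i = 0
      · have hkeq : k = fun i => if i = j then k j else 0 := by
          funext i
          by_cases h : i = j
          · simp [h]
          · simp [h, hbase i h]
        conv_lhs => rw [hkeq]
      · push_neg at hbase
        obtain ⟨i, hij, hki⟩ := hbase
        set k' : Fin n → ℕ := Function.update k i (k i - 1) with hk'def
        have hk' : ∀ i', k' i' < M := by
          intro i'
          have h1 := hk i'
          have h2 := hk i
          simp only [hk'def, Function.update_apply]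
          split <;> rename_i hsp <;> first | (subst hsp; omega) | omega
        have hstep : A k j = A k' j := L1 k hk i j (Ne.symm hij) (Nat.pos_of_ne_zero hki)
        have hsum' : (∑ i', if i' = j then 0 else k' i') ≤ N := by
          have key : (∑ i', if i' = j then 0 else k' i') + (∑ i', if i' = i then 1 else 0)
              = ∑ i', if i' = j then 0 else k i' := by
            rw [← Finset.sum_add_distrib]
            refine Finset.sum_congr rfl (fun i' _ => ?_)
            simp only [hk'def, Function.update_apply]
            rcases eq_or_ne i' j with h | h
            · subst h
              rw [if_pos rfl, if_pos rfl, if_neg (Ne.symm hij)]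
            · rcases eq_or_ne i' i with h2 | h2
              · subst h2
                rw [if_neg h, if_neg h, if_pos rfl, if_pos rfl]
                omega
              · rw [if_neg h, if_neg h, if_neg h2, if_neg h2]
                omega
          have hone : (∑ i' : Fin n, if i' = i then 1 else 0) = 1 := by
            simp [Finset.sum_ite_eq']
          omega
        have := ih k' hk' j hsum'
        rw [hstep, this]
        have : k' j = k j := by
          simp only [hk'def]
          exact Function.update_of_ne (Ne.symm hij) _ _
        rw [this]
  -- vertex value formula
  have L3 : ∀ N : ℕ, ∀ k : Fin n → ℕ, (∀ i, k i < M) → (∑ i, k i) ≤ N →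
      f (v k) = f (v 0) + ∑ j, (∑ m ∈ Finset.range (k j), sg j m)/M := by
    intro N
    induction N with
    | zero =>
      intro k hk hsum
      have hz : ∀ i, k i = 0 :=
        fun i => Finset.sum_eq_zero_iff.mp (Nat.le_zero.mp hsum) i (Finset.mem_univ i)
      have hkeq : k = 0 := funext hz
      subst hkeq
      simp
    | succ N ih =>
      intro k hk hsum
      by_cases hbase : ∀ i, k i = 0
      · have hkeq : k = 0 := funext hbase
        subst hkeq
        simp
      · push_neg at hbase
        obtain ⟨i, hki⟩ := hbase
        set k' : Fin n → ℕ := Function.update k i (k i - 1) with hk'def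
        have hk' : ∀ i', k' i' < M := by
          intro i'
          have h1 := hk i'
          have h2 := hk i
          simp only [hk'def, Function.update_apply]
          split <;> rename_i hsp <;> first | (subst hsp; omega) | omega
        have hkeq : k = Function.update k' i (k' i + 1) := by
          funext i'
          rcases eq_or_ne i' i with h | h
          · subst h
            rw [Function.update_self]
            simp only [hk'def, Function.update_self]
            omega
          · rw [Function.update_of_ne h]
            simp only [hk'def, Function.update_of_ne h]
        have hk_in_k' : ∀ i', (k' i' : ℝ)/M ≤ v k i' ∧ v k i' ≤ ((k' i' : ℝ)+1)/M := by
          refine memv k' k (fun i' => ?_)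
          simp only [hk'def, Function.update_apply]
          split <;> rename_i hsp <;> first | (subst hsp; omega) | omega
        have hstep : f (v k) - f (v k') = A k' i * ((1:ℝ)/(M:ℝ)) := by
          rw [diff k' hk' (v k) (v k') hk_in_k' (memself k')]
          rw [Finset.sum_congr rfl (fun j' _ => by
            rw [show v k j' - v k' j' = if j' = i then (1:ℝ)/(M:ℝ) else 0 by
              conv_lhs => rw [hkeq]
              exact vdiff k' i j'])]
          simp [Finset.sum_ite_eq', mul_ite]
        have hAval : A k' i = sg i (k i - 1) := by
          have := L2 (∑ i', if i' = i then 0 else k' i') k' hk' i le_rfl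
          rw [this]
          congr 1
          simp only [hk'def, Function.update_self]
        have hsum' : (∑ i', k' i') ≤ N := by
          have key : (∑ i', k' i') + (∑ i', if i' = i then 1 else 0) = ∑ i', k i' := by
            rw [← Finset.sum_add_distrib]
            refine Finset.sum_congr rfl (fun i' _ => ?_)
            simp only [hk'def, Function.update_apply]
            rcases eq_or_ne i' i with h | h
            · subst h
              rw [if_pos rfl, if_pos rfl]
              omega
            · rw [if_neg h, if_neg h]
              omega
          have hone : (∑ i' : Fin n, if i' = i then 1 else 0) = 1 := by
            simp [Finset.sum_ite_eq']
          omega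
        have hrec := ih k' hk' hsum'
        -- RHS sums
        have hsums : ∀ j, (∑ m ∈ Finset.range (k j), sg j m)/M
            = (∑ m ∈ Finset.range (k' j), sg j m)/M
              + (if j = i then sg i (k i - 1) * ((1:ℝ)/(M:ℝ)) else 0) := by
          intro j
          by_cases h : j = i
          · subst h
            have h1 : k j = (k j - 1) + 1 := by omega
            have h2 : k' j = k j - 1 := by simp only [hk'def, Function.update_self]
            rw [if_pos rfl, h2]
            conv_lhs => rw [h1]
            rw [Finset.sum_range_succ]
            ring
          · have h2 : k' j = k j := by simp only [hk'def, Function.update_of_ne h]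
            rw [if_neg h, h2, add_zero]
        calc f (v k) = f (v k') + A k' i * (1/M) := by linarith
          _ = f (v 0) + ∑ j, (∑ m ∈ Finset.range (k' j), sg j m)/M + sg i (k i - 1) * ((1:ℝ)/(M:ℝ)) := by
              rw [hrec, hAval]
          _ = f (v 0) + ∑ j, (∑ m ∈ Finset.range (k j), sg j m)/M := by
              rw [Finset.sum_congr rfl (fun j _ => hsums j)]
              rw [Finset.sum_add_distrib]
              simp [Finset.sum_ite_eq']
              ring
  -- value on a cell
  have L4 : ∀ k : Fin n → ℕ, (∀ i, k i < M) → ∀ x : Fin n → ℝ,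
      (∀ i, (k i : ℝ)/M ≤ x i ∧ x i ≤ ((k i : ℝ)+1)/M) →
      f x = f (v k) + ∑ j, sg j (k j) * (x j - (k j : ℝ)/M) := by
    intro k hk x hx
    have hd := diff k hk x (v k) hx (memself k)
    have hA2 : ∀ j, A k j = sg j (k j) :=
      fun j => L2 (∑ i, if i = j then 0 else k i) k hk j le_rfl
    have : f x - f (v k) = ∑ j, sg j (k j) * (x j - (k j : ℝ)/M) := by
      rw [hd]
      exact Finset.sum_congr rfl (fun j _ => by rw [hA2 j])
    linarith
  -- ReLU coefficients
  set c : Fin n → ℕ → ℝ := fun j m => if m = 0 then sg j 0 else sg j m - sg j (m-1) with hcdef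
  -- univariate ReLU sum formula
  have ident : ∀ (j : Fin n) (t : ℝ) (m₀ : ℕ),
      ∑ m ∈ Finset.range (m₀+1), c j m * (t - (m:ℝ)/M)
        = (∑ m ∈ Finset.range m₀, sg j m)/M + sg j m₀ * (t - (m₀:ℝ)/M) := by
    intro j t m₀
    induction m₀ with
    | zero => simp [hcdef]
    | succ m₀ ih =>
      rw [Finset.sum_range_succ, ih, Finset.sum_range_succ]
      have hc1 : c j (m₀+1) = sg j (m₀+1) - sg j m₀ := by
        simp [hcdef]
      rw [hc1]
      push_cast
      ring
  have L5 : ∀ (j : Fin n) (m₀ : ℕ), m₀ < M → ∀ t : ℝ,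
      (m₀:ℝ)/M ≤ t → t ≤ ((m₀:ℝ)+1)/M →
      ∑ m ∈ Finset.range M, c j m * max 0 (t - (m:ℝ)/M)
        = (∑ m ∈ Finset.range m₀, sg j m)/M + sg j m₀ * (t - (m₀:ℝ)/M) := by
    intro j m₀ hm₀ t ht1 ht2
    have hsub : Finset.range (m₀+1) ⊆ Finset.range M := Finset.range_subset_range.mpr hm₀
    have hz : ∀ m ∈ Finset.range M, m ∉ Finset.range (m₀+1) →
        c j m * max 0 (t - (m:ℝ)/M) = 0 := by
      intro m _ hm
      have hm' : m₀ + 1 ≤ m := by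
        simp only [Finset.mem_range, not_lt] at hm
        exact hm
      have hle : ((m₀:ℝ)+1) ≤ (m:ℝ) := by exact_mod_cast hm'
      have : t - (m:ℝ)/M ≤ 0 := by
        have : ((m₀:ℝ)+1)/M ≤ (m:ℝ)/M := by gcongr
        linarith
      rw [max_eq_left this, mul_zero]
    rw [← Finset.sum_subset hsub hz]
    have hmax : ∀ m ∈ Finset.range (m₀+1),
        c j m * max 0 (t - (m:ℝ)/M) = c j m * (t - (m:ℝ)/M) := by
      intro m hm
      have hm' : m ≤ m₀ := by
        simp only [Finset.mem_range] at hm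
        omega
      have hle : (m:ℝ) ≤ (m₀:ℝ) := by exact_mod_cast hm'
      have hd : (m:ℝ)/M ≤ (m₀:ℝ)/M := by gcongr
      have : 0 ≤ t - (m:ℝ)/M := by linarith
      rw [max_eq_right this]
    rw [Finset.sum_congr rfl hmax]
    exact ident j t m₀
  -- the network
  refine ⟨Fin.lastCases 0 (fun i' => fun j =>
            if j = (finProdFinEquiv.symm i').2 then (1:ℝ) else 0),
          Fin.lastCases 1 (fun i' => -(((finProdFinEquiv.symm i').1 : ℕ) : ℝ)/M),
          Fin.lastCases (f (v 0)) (fun i' =>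
            c (finProdFinEquiv.symm i').2 ((finProdFinEquiv.symm i').1 : ℕ)), ?_⟩
  intro x hx
  have hx0 : ∀ i, (0:ℝ) ≤ x i := fun i => hx.1 i
  have hx1 : ∀ i, x i ≤ 1 := fun i => hx.2 i
  -- locate the cell of x
  set k : Fin n → ℕ := fun i => min (⌊(M:ℝ) * x i⌋₊) (M-1) with hkdef
  have hk : ∀ i, k i < M := fun i => lt_of_le_of_lt (min_le_right _ _) (by omega)
  have hcell : ∀ i, (k i : ℝ)/M ≤ x i ∧ x i ≤ ((k i : ℝ)+1)/M := by
    intro i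
    constructor
    · rw [div_le_iff₀ hM0]
      have h1 : (k i : ℝ) ≤ (⌊(M:ℝ) * x i⌋₊ : ℝ) := by
        exact_mod_cast min_le_left _ _
      have h2 : (⌊(M:ℝ) * x i⌋₊ : ℝ) ≤ (M:ℝ) * x i :=
        Nat.floor_le (mul_nonneg hM0.le (hx0 i))
      linarith [mul_comm (x i) (M:ℝ)]
    · rw [le_div_iff₀ hM0]
      by_cases hfl : ⌊(M:ℝ) * x i⌋₊ ≤ M - 1
      · have hke : k i = ⌊(M:ℝ) * x i⌋₊ := min_eq_left hfl
        have := Nat.lt_floor_add_one ((M:ℝ) * x i)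
        rw [hke]
        linarith [mul_comm (x i) (M:ℝ)]
      · have hke : k i = M - 1 := min_eq_right (by omega)
        have hc : ((M-1:ℕ) : ℝ) = (M:ℝ) - 1 := by
          have h1 : 1 ≤ M := by omega
          push_cast [Nat.cast_sub h1]
          ring
        rw [hke, hc]
        have := hx1 i
        nlinarith
  -- main separability formula
  have main : f x = f (v 0) + ∑ j, ∑ m ∈ Finset.range M, c j m * max 0 (x j - (m:ℝ)/M) := by
    have h4 := L4 k hk x hcell
    have h3 := L3 (∑ i, k i) k hk le_rfl
    have h5 : ∀ j, ∑ m ∈ Finset.range M, c j m * max 0 (x j - (m:ℝ)/M)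
        = (∑ m ∈ Finset.range (k j), sg j m)/M + sg j (k j) * (x j - (k j : ℝ)/M) :=
      fun j => L5 j (k j) (hk j) (x j) (hcell j).1 (hcell j).2
    rw [h4, h3, Finset.sum_congr rfl (fun j _ => h5 j), Finset.sum_add_distrib]
    ring
  rw [main]
  -- compute the network sum
  rw [Fin.sum_univ_castSucc]
  simp only [Fin.lastCases_last, Fin.lastCases_castSucc, Pi.zero_apply, zero_mul,
    Finset.sum_const_zero, zero_add]
  rw [max_eq_right (zero_le_one), mul_one]
  have hterm : ∀ i' : Fin (M * n),
      c (finProdFinEquiv.symm i').2 ((finProdFinEquiv.symm i').1 : ℕ) *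
        max 0 ((∑ j, (if j = (finProdFinEquiv.symm i').2 then (1:ℝ) else 0) * x j)
          + -(((finProdFinEquiv.symm i').1 : ℕ) : ℝ)/M)
      = c (finProdFinEquiv.symm i').2 ((finProdFinEquiv.symm i').1 : ℕ) *
        max 0 (x (finProdFinEquiv.symm i').2 - (((finProdFinEquiv.symm i').1 : ℕ) : ℝ)/M) := by
    intro i'
    have hs : (∑ j, (if j = (finProdFinEquiv.symm i').2 then (1:ℝ) else 0) * x j)
        = x (finProdFinEquiv.symm i').2 := by
      simp [ite_mul, Finset.sum_ite_eq']
    rw [hs]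
    ring_nf
  rw [Finset.sum_congr rfl (fun i' _ => hterm i')]
  have hequiv : ∑ i' : Fin (M * n),
      c (finProdFinEquiv.symm i').2 ((finProdFinEquiv.symm i').1 : ℕ) *
        max 0 (x (finProdFinEquiv.symm i').2 - (((finProdFinEquiv.symm i').1 : ℕ) : ℝ)/M)
      = ∑ p : Fin M × Fin n, c p.2 (p.1 : ℕ) * max 0 (x p.2 - ((p.1 : ℕ) : ℝ)/M) := by
    rw [← Equiv.sum_comp finProdFinEquiv
      (fun i' => c (finProdFinEquiv.symm i').2 ((finProdFinEquiv.symm i').1 : ℕ) *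
        max 0 (x (finProdFinEquiv.symm i').2 - (((finProdFinEquiv.symm i').1 : ℕ) : ℝ)/M))]
    simp
  have hswap : ∑ p : Fin M × Fin n, c p.2 (p.1 : ℕ) * max 0 (x p.2 - ((p.1 : ℕ) : ℝ)/M)
      = ∑ j, ∑ m ∈ Finset.range M, c j m * max 0 (x j - (m:ℝ)/M) := by
    rw [Fintype.sum_prod_type]
    conv_lhs => rw [Finset.sum_comm]
    exact Finset.sum_congr rfl (fun j _ => Fin.sum_univ_eq_sum_range
      (fun m => c j m * max 0 (x j - (m:ℝ)/M)) M)
  rw [hequiv, hswap]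
  ring
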